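/- arXiv:2005.06316 — 3 statements merged into one kernel-verified Lean document; each statement's English description precedes it below -/
import Mathlib

section
/- Let g : V → V → ℝ^d, let h : V → ℝ^d be a rank-1 tensor field on the vertices, and let U be an orthogonal d×d real matrix. Define g'(i,j) = U · g(i,j) and h'(j) = U · h(j). Define the generalized contraction ((g⊗g) ⊙ h) : V → ℝ^d componentwise by ((g⊗g) ⊙ h)(i)(k₁) = Σ_{j,l ∈ V} Σ_{k₂} g(i,j)(k₁) · g(j,l)(k₂) · h(l)(k₂). Then this contraction is rank-1 equivariant: for all i ∈ V, ((g'⊗g') ⊙ h')(i) = U · ((g⊗g) ⊙ h)(i). -/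
open Matrix

/-- Matrix–vector product, viewed as acting on Euclidean space. -/
def matVec {d : ℕ} (U : Matrix (Fin d) (Fin d) ℝ) (v : EuclideanSpace ℝ (Fin d)) :
    EuclideanSpace ℝ (Fin d) := WithLp.toLp 2 (U.mulVec v)

lemma orth_sum {d : ℕ} (U : Matrix.orthogonalGroup (Fin d) ℝ) (m n : Fin d) :
    ∑ k : Fin d, (U : Matrix (Fin d) (Fin d) ℝ) k m * (U : Matrix (Fin d) (Fin d) ℝ) k n
      = if m = n then 1 else 0 := by
  have hU : (U : Matrix (Fin d) (Fin d) ℝ)ᵀ * U = 1 :=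
    (Matrix.mem_orthogonalGroup_iff' (Fin d) ℝ).mp U.2
  have := congrFun (congrFun hU m) n
  simpa [Matrix.mul_apply, Matrix.transpose_apply, Matrix.one_apply] using this

lemma key_sum {d : ℕ} (U : Matrix.orthogonalGroup (Fin d) ℝ)
    (a b : EuclideanSpace ℝ (Fin d)) :
    ∑ k : Fin d, matVec (U : Matrix (Fin d) (Fin d) ℝ) a k *
        matVec (U : Matrix (Fin d) (Fin d) ℝ) b k = ∑ k : Fin d, a k * b k := by
  simp only [matVec, Matrix.mulVec, dotProduct, PiLp.toLp_apply, WithLp.ofLp_toLp]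
  calc ∑ k : Fin d, (∑ m, (U : Matrix (Fin d) (Fin d) ℝ) k m * a m) *
          (∑ n, (U : Matrix (Fin d) (Fin d) ℝ) k n * b n)
      = ∑ m, ∑ n, (∑ k : Fin d, (U : Matrix (Fin d) (Fin d) ℝ) k m *
          (U : Matrix (Fin d) (Fin d) ℝ) k n) * (a m * b n) := by
        simp_rw [Finset.sum_mul, Finset.mul_sum]
        rw [Finset.sum_comm]
        refine Finset.sum_congr rfl fun m _ => ?_
        rw [Finset.sum_comm]
        exact Finset.sum_congr rfl fun n _ => Finset.sum_congr rfl fun k _ => by ring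
    _ = ∑ k : Fin d, a k * b k := by
        simp_rw [orth_sum U, ite_mul, one_mul, zero_mul]
        simp

/-- The generalized contraction
`((g⊗g) ⊙ h)(i)(k₁) = Σ_{j,l} Σ_{k₂} g(i,j)(k₁) * g(j,l)(k₂) * h(l)(k₂)`
is rank-1 equivariant under simultaneous orthogonal transformations of `g` and `h`. -/
theorem tensor_power_contraction_rank1_equivariant
    {V : Type*} [Fintype V] {d : ℕ}
    (g : V → V → EuclideanSpace ℝ (Fin d))
    (h : V → EuclideanSpace ℝ (Fin d))
    (U : Matrix.orthogonalGroup (Fin d) ℝ)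
    (g' : V → V → EuclideanSpace ℝ (Fin d))
    (h' : V → EuclideanSpace ℝ (Fin d))
    (hg' : ∀ i j, g' i j = matVec (U : Matrix (Fin d) (Fin d) ℝ) (g i j))
    (hh' : ∀ j, h' j = matVec (U : Matrix (Fin d) (Fin d) ℝ) (h j))
    (i : V) :
    (WithLp.toLp 2 (fun k₁ : Fin d => ∑ j : V, ∑ l : V, ∑ k₂ : Fin d, g' i j k₁ * g' j l k₂ * h' l k₂) :
        EuclideanSpace ℝ (Fin d))
      = matVec (U : Matrix (Fin d) (Fin d) ℝ)
          (WithLp.toLp 2 (fun k₁ : Fin d => ∑ j : V, ∑ l : V, ∑ k₂ : Fin d, g i j k₁ * g j l k₂ * h l k₂)) := by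
  ext k₁
  simp only [hg', hh', PiLp.toLp_apply]
  have lhs_eq : ∑ j : V, ∑ l : V, ∑ k₂ : Fin d,
      matVec (U : Matrix (Fin d) (Fin d) ℝ) (g i j) k₁ *
        matVec (U : Matrix (Fin d) (Fin d) ℝ) (g j l) k₂ *
        matVec (U : Matrix (Fin d) (Fin d) ℝ) (h l) k₂
      = ∑ j : V, matVec (U : Matrix (Fin d) (Fin d) ℝ) (g i j) k₁ *
          ∑ l : V, ∑ k₂ : Fin d, g j l k₂ * h l k₂ := by
    refine Finset.sum_congr rfl fun j _ => ?_
    rw [Finset.mul_sum]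
    refine Finset.sum_congr rfl fun l _ => ?_
    rw [← key_sum U (g j l) (h l), Finset.mul_sum]
    exact Finset.sum_congr rfl fun k₂ _ => by ring
  rw [lhs_eq]
  show _ = matVec (U : Matrix (Fin d) (Fin d) ℝ) _ k₁
  simp only [matVec, Matrix.mulVec, dotProduct, PiLp.toLp_apply, WithLp.ofLp_toLp]
  symm
  calc ∑ m : Fin d, (U : Matrix (Fin d) (Fin d) ℝ) k₁ m *
          ∑ j : V, ∑ l : V, ∑ k₂ : Fin d, g i j m * g j l k₂ * h l k₂
      = ∑ m : Fin d, ∑ j : V, (U : Matrix (Fin d) (Fin d) ℝ) k₁ m *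
          (g i j m * ∑ l : V, ∑ k₂ : Fin d, g j l k₂ * h l k₂) := by
        refine Finset.sum_congr rfl fun m _ => ?_
        rw [show (∑ j : V, ∑ l : V, ∑ k₂ : Fin d, g i j m * g j l k₂ * h l k₂)
            = ∑ j : V, g i j m * ∑ l : V, ∑ k₂ : Fin d, g j l k₂ * h l k₂ from
          Finset.sum_congr rfl fun j _ => by
            rw [Finset.mul_sum]
            exact Finset.sum_congr rfl fun l _ => by
              rw [Finset.mul_sum]
              exact Finset.sum_congr rfl fun k₂ _ => by ring]
        rw [Finset.mul_sum]
    _ = ∑ j : V, ∑ m : Fin d, (U : Matrix (Fin d) (Fin d) ℝ) k₁ m *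
          (g i j m * ∑ l : V, ∑ k₂ : Fin d, g j l k₂ * h l k₂) := Finset.sum_comm
    _ = ∑ j : V, (∑ m : Fin d, (U : Matrix (Fin d) (Fin d) ℝ) k₁ m * g i j m) *
          ∑ l : V, ∑ k₂ : Fin d, g j l k₂ * h l k₂ := by
        refine Finset.sum_congr rfl fun j _ => ?_
        rw [Finset.sum_mul]
        exact Finset.sum_congr rfl fun m _ => by ring
end

section
/- Let x : V → ℝ^d, w : V → V → ℝ, and A : V → V → ℝ with A(i,i) = 0 for all i, and suppose x(l) ≠ x(i) whenever w(i,l)·A(i,l) ≠ 0. Let M_i(x) = Σ_{l ∈ V} ((x(l) − x(i))/‖x(l) − x(i)‖) ⊗ ((x(l) − x(i))/‖x(l) − x(i)‖) · w(i,l) · A(i,l) and suppose M_i(x) is invertible for every i. Define D(x)(i,j) = M_i(x)⁻¹ · ((x(j) − x(i))/‖x(j) − x(i)‖²) · w(i,j) · A(i,j) ∈ ℝ^d (set to 0 when w(i,j)·A(i,j) = 0). Then D is translation invariant and orthogonal-transformation equivariant: for every t ∈ ℝ^d and orthogonal d×d matrix U, and all i,j ∈ V, D(fun v => U·x(v) +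 t)(i,j) = U · D(x)(i,j). -/
open Matrix

/-- Outer product of two vectors: the matrix with entries `v k * w m`. -/
def outer {d : ℕ} (v w : EuclideanSpace ℝ (Fin d)) : Matrix (Fin d) (Fin d) ℝ :=
  Matrix.of fun k m => v k * w m

/-- The matrix `M_i(x) = Σ_l ((x l − x i)/‖x l − x i‖) ⊗ ((x l − x i)/‖x l − x i‖) ⬝ w(i,l) ⬝ A(i,l)`. -/
noncomputable def Mmat {V : Type*} [Fintype V] {d : ℕ}
    (w A : V → V → ℝ) (x : V → EuclideanSpace ℝ (Fin d)) (i : V) :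
    Matrix (Fin d) (Fin d) ℝ :=
  ∑ l : V, (w i l * A i l) •
    outer (‖x l - x i‖⁻¹ • (x l - x i)) (‖x l - x i‖⁻¹ • (x l - x i))

/-- The IsoAM `D(x)(i,j) = M_i(x)⁻¹ ⬝ ((x j − x i)/‖x j − x i‖²) ⬝ w(i,j) ⬝ A(i,j)`
(equal to `0` whenever `w(i,j) ⬝ A(i,j) = 0`, since the scalar factor vanishes). -/
noncomputable def Dvec {V : Type*} [Fintype V] {d : ℕ}
    (w A : V → V → ℝ) (x : V → EuclideanSpace ℝ (Fin d)) (i j : V) :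
    EuclideanSpace ℝ (Fin d) :=
  (w i j * A i j / ‖x j - x i‖ ^ 2) • matVec (Mmat w A x i)⁻¹ (x j - x i)

section Aux

variable {d : ℕ}

lemma matVec_sub (U : Matrix (Fin d) (Fin d) ℝ) (a b : EuclideanSpace ℝ (Fin d)) :
    matVec U (a - b) = matVec U a - matVec U b := by
  ext k
  simp only [matVec, PiLp.sub_apply, WithLp.ofLp_sub]
  rw [Matrix.mulVec_sub]
  rfl

lemma matVec_smul (U : Matrix (Fin d) (Fin d) ℝ) (c : ℝ) (a : EuclideanSpace ℝ (Fin d)) :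
    matVec U (c • a) = c • matVec U a := by
  ext k
  simp only [matVec, PiLp.smul_apply, WithLp.ofLp_smul]
  rw [Matrix.mulVec_smul]
  rfl

lemma norm_matVec {U : Matrix (Fin d) (Fin d) ℝ} (hU : Uᵀ * U = 1)
    (v : EuclideanSpace ℝ (Fin d)) : ‖matVec U v‖ = ‖v‖ := by
  have key : ∀ u : EuclideanSpace ℝ (Fin d), ‖u‖ = Real.sqrt (u ⬝ᵥ u) := by
    intro u
    rw [EuclideanSpace.norm_eq]
    congr 1
    simp [dotProduct, Real.norm_eq_abs, sq_abs, sq]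
  rw [key, key]
  congr 1
  have h1 : (matVec U v : Fin d → ℝ) = U.mulVec v := rfl
  rw [h1, Matrix.dotProduct_mulVec]
  have h2 : (U.mulVec v) ᵥ* U = (Uᵀ * U).mulVec v := by
    rw [← Matrix.mulVec_transpose]
    rw [← Matrix.mulVec_mulVec]
  rw [h2, hU, Matrix.one_mulVec]

lemma outer_matVec (U : Matrix (Fin d) (Fin d) ℝ) (a b : EuclideanSpace ℝ (Fin d)) :
    outer (matVec U a) (matVec U b) = U * outer a b * Uᵀ := by
  ext k m
  simp only [outer, matVec, Matrix.mul_apply, Matrix.of_apply, Matrix.mulVec, dotProduct,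
    Matrix.transpose_apply, Finset.sum_mul, Finset.mul_sum]
  refine Finset.sum_congr rfl fun p _ => Finset.sum_congr rfl fun q _ => ?_
  ring

end Aux

/-- The IsoAM `D` is translation invariant and orthogonal-transformation
equivariant: `D(U∘x + t)(i,j) = U ⬝ D(x)(i,j)`. -/
theorem Dvec_isometric_equivariant
    {V : Type*} [Fintype V] {d : ℕ}
    (x : V → EuclideanSpace ℝ (Fin d))
    (w A : V → V → ℝ)
    (hA : ∀ i, A i i = 0)
    (hne : ∀ i l, w i l * A i l ≠ 0 → x l ≠ x i)
    (hInv : ∀ i, IsUnit (Mmat w A x i))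
    (U : Matrix.orthogonalGroup (Fin d) ℝ) (t : EuclideanSpace ℝ (Fin d)) (i j : V) :
    Dvec w A (fun v => matVec (U : Matrix (Fin d) (Fin d) ℝ) (x v) + t) i j
      = matVec (U : Matrix (Fin d) (Fin d) ℝ) (Dvec w A x i j) := by
  set Uo : Matrix (Fin d) (Fin d) ℝ := (U : Matrix (Fin d) (Fin d) ℝ) with hUo
  have hU : Uoᵀ * Uo = 1 := by
    have := U.2
    rw [Matrix.mem_orthogonalGroup_iff'] at this
    exact this
  have hU' : Uo * Uoᵀ = 1 := by
    have := U.2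
    rw [Matrix.mem_orthogonalGroup_iff] at this
    exact this
  set y : V → EuclideanSpace ℝ (Fin d) := fun v => matVec Uo (x v) + t with hy
  have hdiff : ∀ l i' : V, y l - y i' = matVec Uo (x l - x i') := by
    intro l i'
    rw [hy]
    simp only
    rw [add_sub_add_right_eq_sub, matVec_sub]
  have hnorm : ∀ l i' : V, ‖y l - y i'‖ = ‖x l - x i'‖ := by
    intro l i'
    rw [hdiff, norm_matVec hU]
  have hM : Mmat w A y i = Uo * Mmat w A x i * Uoᵀ := by
    unfold Mmat
    rw [Finset.mul_sum, Finset.sum_mul]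
    refine Finset.sum_congr rfl fun l _ => ?_
    rw [hnorm, hdiff, ← matVec_smul, outer_matVec]
    rw [Matrix.mul_smul, Matrix.smul_mul]
  have hinv : (Mmat w A y i)⁻¹ = Uo * (Mmat w A x i)⁻¹ * Uoᵀ := by
    rw [hM, Matrix.mul_inv_rev, Matrix.mul_inv_rev]
    rw [Matrix.inv_eq_left_inv hU, Matrix.inv_eq_left_inv hU']
    rw [Matrix.mul_assoc]
  show (w i j * A i j / ‖y j - y i‖ ^ 2) • matVec (Mmat w A y i)⁻¹ (y j - y i)
      = matVec Uo ((w i j * A i j / ‖x j - x i‖ ^ 2) • matVec (Mmat w A x i)⁻¹ (x j - x i))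
  rw [hnorm, hdiff, hinv, matVec_smul]
  congr 1
  show WithLp.toLp 2 ((Uo * (Mmat w A x i)⁻¹ * Uoᵀ).mulVec (Uo.mulVec (x j - x i)))
      = WithLp.toLp 2 (Uo.mulVec ((Mmat w A x i)⁻¹.mulVec (x j - x i)))
  rw [Matrix.mulVec_mulVec, Matrix.mul_assoc, Matrix.mul_assoc, hU, Matrix.mul_one]
  rw [← Matrix.mulVec_mulVec]
end

section
/- Let x : V → ℝ^d, let i ∈ V, and let w : V → V → ℝ and A : V → V → ℝ satisfy w(i,l)·A(i,l) ≥ 0 for all l, with x(l) ≠ x(i) whenever w(i,l)·A(i,l) > 0. Define M_i = Σ_{l ∈ V} ((x(l) − x(i))/‖x(l) − x(i)‖) ⊗ ((x(l) − x(i))/‖x(l) − x(i)‖) · w(i,l) · A(i,l). If the set of vectors { x(l) − x(i) : l ∈ V, w(i,l)·A(i,l) > 0 } spans ℝ^d, then M_i is positive definite; in particular, M_i is invertible. -/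
open Matrix

lemma quadform_outer {d : ℕ} (u : EuclideanSpace ℝ (Fin d)) (v : Fin d → ℝ) :
    v ⬝ᵥ (outer u u).mulVec v = (∑ k, u k * v k) ^ 2 := by
  simp only [outer, Matrix.mulVec, dotProduct, Matrix.of_apply]
  rw [sq]
  rw [Finset.sum_mul]
  congr 1; ext k
  rw [Finset.mul_sum, Finset.mul_sum]
  congr 1; ext m; ring

lemma quadform_Mmat {V : Type*} [Fintype V] {d : ℕ}
    (w A : V → V → ℝ) (x : V → EuclideanSpace ℝ (Fin d)) (i : V) (v : Fin d → ℝ) :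
    v ⬝ᵥ (Mmat w A x i).mulVec v
      = ∑ l : V, (w i l * A i l) * (‖x l - x i‖⁻¹) ^ 2 * (∑ k, (x l - x i) k * v k) ^ 2 := by
  unfold Mmat
  have hsum : v ⬝ᵥ (∑ l : V, (w i l * A i l) •
      outer (‖x l - x i‖⁻¹ • (x l - x i)) (‖x l - x i‖⁻¹ • (x l - x i))).mulVec v
      = ∑ l : V, v ⬝ᵥ ((w i l * A i l) •
      outer (‖x l - x i‖⁻¹ • (x l - x i)) (‖x l - x i‖⁻¹ • (x l - x i))).mulVec v := by
    let g : Matrix (Fin d) (Fin d) ℝ →+ ℝ :=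
      { toFun := fun M => v ⬝ᵥ M.mulVec v
        map_zero' := by simp
        map_add' := fun M N => by
          rw [Matrix.add_mulVec, dotProduct_add] }
    exact map_sum g _ _
  rw [hsum]
  congr 1; ext l
  rw [Matrix.smul_mulVec, dotProduct_smul, smul_eq_mul]
  rw [quadform_outer]
  have : ∀ k, (‖x l - x i‖⁻¹ • (x l - x i)) k = ‖x l - x i‖⁻¹ * (x l - x i) k := by
    intro k; rfl
  simp only [this]
  have h3 : (∑ k, ‖x l - x i‖⁻¹ * (x l - x i) k * v k)
      = ‖x l - x i‖⁻¹ * ∑ k, (x l - x i) k * v k := by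
    rw [Finset.mul_sum]
    exact Finset.sum_congr rfl fun k _ => by ring
  rw [h3]
  ring

/-- If the weights `w(i,l) ⬝ A(i,l)` are nonnegative and the vectors
`x l − x i` with strictly positive weight span `ℝ^d`, then `M_i` is positive definite
(`vᵀ M_i v > 0` for every nonzero `v`); in particular `M_i` is invertible. -/
theorem Mmat_posDef_of_span
    {V : Type*} [Fintype V] {d : ℕ}
    (x : V → EuclideanSpace ℝ (Fin d)) (i : V)
    (w A : V → V → ℝ)
    (hnonneg : ∀ l, 0 ≤ w i l * A i l)
    (hne : ∀ l, 0 < w i l * A i l → x l ≠ x i)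
    (hspan : Submodule.span ℝ
        {y : EuclideanSpace ℝ (Fin d) | ∃ l : V, 0 < w i l * A i l ∧ y = x l - x i} = ⊤) :
    (∀ v : Fin d → ℝ, v ≠ 0 → 0 < v ⬝ᵥ (Mmat w A x i).mulVec v)
      ∧ IsUnit (Mmat w A x i) := by
  have hpos : ∀ v : Fin d → ℝ, v ≠ 0 → 0 < v ⬝ᵥ (Mmat w A x i).mulVec v := by
    intro v hv
    rw [quadform_Mmat]
    have hterm : ∀ l : V, 0 ≤ (w i l * A i l) * (‖x l - x i‖⁻¹) ^ 2 *
        (∑ k, (x l - x i) k * v k) ^ 2 := fun l =>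
      mul_nonneg (mul_nonneg (hnonneg l) (sq_nonneg _)) (sq_nonneg _)
    -- find an l with positive weight and nonzero inner product
    by_contra h
    push_neg at h
    have hzero : ∀ l : V, (w i l * A i l) * (‖x l - x i‖⁻¹) ^ 2 *
        (∑ k, (x l - x i) k * v k) ^ 2 = 0 := by
      intro l
      have := (Finset.sum_eq_zero_iff_of_nonneg (fun l _ => hterm l)).1
        (le_antisymm h (Finset.sum_nonneg fun l _ => hterm l)) l (Finset.mem_univ l)
      exact this
    -- hence v orthogonal to all spanning vectors
    have horth : ∀ y ∈ {y : EuclideanSpace ℝ (Fin d) | ∃ l : V, 0 < w i l * A i l ∧ y = x l - x i},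
        (∑ k, y k * v k) = 0 := by
      rintro y ⟨l, hl, rfl⟩
      have hnorm : ‖x l - x i‖ ≠ 0 := by
        simpa [sub_eq_zero] using hne l hl
      have := hzero l
      have h1 : (w i l * A i l) * (‖x l - x i‖⁻¹) ^ 2 ≠ 0 :=
        mul_ne_zero hl.ne' (pow_ne_zero _ (inv_ne_zero hnorm))
      have h2 : (∑ k, (x l - x i) k * v k) ^ 2 = 0 :=
        (mul_eq_zero.1 this).resolve_left h1
      exact pow_eq_zero_iff (n := 2) (by norm_num) |>.1 h2
    -- the linear functional y ↦ Σ y k * v k vanishes on the span, hence everywhere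
    set f : EuclideanSpace ℝ (Fin d) →ₗ[ℝ] ℝ :=
      { toFun := fun y => ∑ k, y k * v k
        map_add' := by
          intro a b
          simp only
          rw [← Finset.sum_add_distrib]
          congr 1; ext k
          have : (a + b) k = a k + b k := rfl
          rw [this]; ring
        map_smul' := by
          intro c a
          simp only [RingHom.id_apply]
          rw [smul_eq_mul, Finset.mul_sum]
          congr 1; ext k
          have : (c • a) k = c * a k := rfl
          rw [this]; ring }
    have hker : Submodule.span ℝ
        {y : EuclideanSpace ℝ (Fin d) | ∃ l : V, 0 < w i l * A i l ∧ y = x l - x i}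
        ≤ LinearMap.ker f := by
      rw [Submodule.span_le]
      intro y hy
      exact horth y hy
    rw [hspan, top_le_iff] at hker
    have hfv : f (WithLp.toLp 2 v : EuclideanSpace ℝ (Fin d)) = 0 := by
      have : (WithLp.toLp 2 v : EuclideanSpace ℝ (Fin d)) ∈ LinearMap.ker f := by rw [hker]; trivial
      exact this
    have : ∑ k, v k * v k = 0 := hfv
    have hv0 : v = 0 := by
      funext k
      have := (Finset.sum_eq_zero_iff_of_nonneg
        (fun k _ => mul_self_nonneg (v k))).1 this k (Finset.mem_univ k)
      exact mul_self_eq_zero.1 this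
    exact hv hv0
  refine ⟨hpos, Matrix.mulVec_injective_iff_isUnit.1 ?_⟩
  have : Function.Injective ((Mmat w A x i).mulVecLin) := by
    rw [← LinearMap.ker_eq_bot, Submodule.eq_bot_iff]
    intro v hv
    by_contra hv0
    have := hpos v hv0
    have hvz : (Mmat w A x i).mulVec v = 0 := hv
    rw [hvz] at this
    simp at this
  exact this
end
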